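/- arXiv:1706.09264 — 2 statements merged into one kernel-verified Lean document; each statement's English description precedes it below -/
import Mathlib

section
/- If D and C are Cantor sets in S^3 with D ⊆ C, then for every point x ∈ D, the local genus of D at x is at most the local genus of C at x. -/
noncomputable section

open Set

/-- A component of a compact set is compact. -/
lemma isCompact_connectedComponentIn {X : Type*} [TopologicalSpace X] {F : Set X}
    (hF : IsCompact F) (x : X) : IsCompact (connectedComponentIn F x) := by
  by_cases hx : x ∈ F
  · rw [connectedComponentIn_eq_image hx]
    haveI : CompactSpace F := isCompact_iff_compactSpace.mp hF
    exact (isClosed_connectedComponent.isCompact).image continuous_subtype_val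
  · rw [connectedComponentIn_eq_empty hx]; exact isCompact_empty

/-- The intersection of a decreasing sequence of nonempty compact preconnected sets in a
Hausdorff space is preconnected. -/
lemma isPreconnected_iInter_of_antitone {X : Type*} [TopologicalSpace X] [T2Space X]
    (K : ℕ → Set X) (hanti : Antitone K) (hc : ∀ i, IsCompact (K i))
    (hcon : ∀ i, IsPreconnected (K i)) :
    IsPreconnected (⋂ i, K i) := by
  set T := ⋂ i, K i
  intro u v hu hv hsub ⟨a, haT, hau⟩ ⟨b, hbT, hbv⟩
  by_contra hne
  rw [Set.not_nonempty_iff_eq_empty] at hne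
  -- A, B : closed pieces partitioning T
  have hTc : IsCompact T := (hc 0).of_isClosed_subset
    (isClosed_iInter fun i => (hc i).isClosed) (iInter_subset _ 0)
  set A := T \ v with hA
  set B := T \ u with hB
  have hAc : IsCompact A := hTc.diff hv
  have hBc : IsCompact B := hTc.diff hu
  have hdisj : Disjoint A B := by
    rw [Set.disjoint_left]
    rintro z ⟨hzT, hznv⟩ ⟨_, hznu⟩
    rcases hsub hzT with h | h
    · exact hznu h
    · exact hznv h
  obtain ⟨U, V, hU, hV, hAU, hBV, hUV⟩ := SeparatedNhds.of_isCompact_isCompact hAc hBc hdisj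
  have hTUV : T ⊆ U ∪ V := by
    intro z hz
    by_cases hzu : z ∈ u
    · by_cases hzv : z ∈ v
      · exfalso
        have hmem : z ∈ T ∩ (u ∩ v) := ⟨hz, hzu, hzv⟩
        rw [hne] at hmem
        exact hmem
      · exact Or.inl (hAU ⟨hz, hzv⟩)
    · exact Or.inr (hBV ⟨hz, hzu⟩)
  -- some K i is inside U ∪ V
  have hempty : ((K 0) ∩ ⋂ i, (K i ∩ (U ∪ V)ᶜ)) = ∅ := by
    rw [Set.eq_empty_iff_forall_notMem]
    rintro z ⟨_, hz⟩
    simp only [Set.mem_iInter, Set.mem_inter_iff, Set.mem_compl_iff] at hz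
    exact (hz 0).2 (hTUV (Set.mem_iInter.mpr fun i => (hz i).1))
  obtain ⟨i, hi⟩ := (hc 0).elim_directed_family_closed _
    (fun i => ((hc i).isClosed.inter (hU.union hV).isClosed_compl))
    hempty
    (fun i j => ⟨max i j, Set.inter_subset_inter_left _ (hanti (le_max_left i j)),
      Set.inter_subset_inter_left _ (hanti (le_max_right i j))⟩)
  have hKi : K i ⊆ U ∪ V := by
    intro z hz
    by_contra hzc
    have : z ∈ K 0 ∩ (K i ∩ (U ∪ V)ᶜ) := ⟨hanti (Nat.zero_le i) hz, hz, hzc⟩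
    rw [hi] at this; exact this
  have haK : a ∈ K i ∩ U := ⟨Set.mem_iInter.mp haT i, hAU ⟨haT, fun hav =>
    (by rw [Set.eq_empty_iff_forall_notMem] at hne; exact hne a ⟨haT, hau, hav⟩)⟩⟩
  have hbK : b ∈ K i ∩ V := ⟨Set.mem_iInter.mp hbT i, hBV ⟨hbT, fun hbu =>
    (by rw [Set.eq_empty_iff_forall_notMem] at hne; exact hne b ⟨hbT, hbu, hbv⟩)⟩⟩
  obtain ⟨z, _, hzU, hzV⟩ := hcon i U V hU hV hKi ⟨a, haK⟩ ⟨b, hbK⟩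
  exact (Set.disjoint_left.mp hUV) hzU hzV

/-- The 3-sphere, realized as the unit sphere in ℝ⁴. -/
abbrev S3 : Type := Metric.sphere (0 : EuclideanSpace ℝ (Fin 4)) 1

/-- A Cantor set: nonempty, compact, perfect, totally disconnected. -/
def IsCantorSet {X : Type*} [TopologicalSpace X] (C : Set X) : Prop :=
  C.Nonempty ∧ IsCompact C ∧ Perfect C ∧ IsTotallyDisconnected C

/-- A defining sequence for a compactum `C ⊆ S³`: a nested sequence of compacta,
each a finite disjoint union of handlebodies, with `M (i+1) ⊆ Int (M i)` and `⋂ M i = C`. -/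
structure DefiningSeq (Handlebody : Set S3 → Prop) (C : Set S3) where
  M : ℕ → Set S3
  compact : ∀ i, IsCompact (M i)
  nested : ∀ i, M (i + 1) ⊆ interior (M i)
  handle : ∀ i, ∀ x ∈ M i, Handlebody (connectedComponentIn (M i) x)
  finiteComps : ∀ i, {S : Set S3 | ∃ x ∈ M i, S = connectedComponentIn (M i) x}.Finite
  iInter_eq : ⋂ i, M i = C

/-- `g_x(C; (M_i))`: supremum of genera of the components containing `x`. -/
def seqGenus (genus : Set S3 → ℕ) {Handlebody : Set S3 → Prop} {C : Set S3}
    (s : DefiningSeq Handlebody C) (x : S3) : ℕ∞ :=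
  ⨆ i, (genus (connectedComponentIn (s.M i) x) : ℕ∞)

/-- The local genus `g_x(C)`: infimum over all defining sequences. -/
def localGenus (Handlebody : Set S3 → Prop) (genus : Set S3 → ℕ)
    (x : S3) (C : Set S3) : ℕ∞ :=
  ⨅ s : DefiningSeq Handlebody C, seqGenus genus s x

section Restrict

variable {Handlebody : Set S3 → Prop} {C D : Set S3}

/-- The union of the components of `s.M i` that meet `D`. -/
def restrictM (s : DefiningSeq Handlebody C) (D : Set S3) (i : ℕ) : Set S3 :=
  ⋃ d ∈ D, connectedComponentIn (s.M i) d

variable (s : DefiningSeq Handlebody C)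

lemma M_antitone : Antitone s.M :=
  antitone_nat_of_succ_le fun n => (s.nested n).trans interior_subset

lemma C_subset_M (i : ℕ) : C ⊆ s.M i := fun y hy => by
  have h : y ∈ ⋂ j, s.M j := by rw [s.iInter_eq]; exact hy
  exact Set.mem_iInter.mp h i

lemma restrictM_subset (i : ℕ) : restrictM s D i ⊆ s.M i :=
  Set.iUnion₂_subset fun d _ => connectedComponentIn_subset _ _

lemma mem_restrictM (hsub : D ⊆ C) {d : S3} (hd : d ∈ D) (i : ℕ) :
    d ∈ restrictM s D i :=
  Set.mem_biUnion hd (mem_connectedComponentIn (C_subset_M s i (hsub hd)))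

/-- For points of `restrictM`, the component there agrees with the component in `s.M i`. -/
lemma comp_restrictM_eq (i : ℕ) {y : S3} (hy : y ∈ restrictM s D i) :
    connectedComponentIn (restrictM s D i) y = connectedComponentIn (s.M i) y := by
  obtain ⟨d, hd, hyd⟩ := Set.mem_iUnion₂.mp hy
  have h1 : connectedComponentIn (s.M i) y = connectedComponentIn (s.M i) d :=
    ((connectedComponentIn_eq hyd).symm : _)
  have hyM : y ∈ s.M i := connectedComponentIn_subset _ _ hyd
  refine Set.Subset.antisymm (connectedComponentIn_mono y (restrictM_subset s i)) ?_
  have hsubR : connectedComponentIn (s.M i) y ⊆ restrictM s D i := by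
    rw [h1]; exact Set.subset_biUnion_of_mem hd
  exact (isPreconnected_connectedComponentIn).subset_connectedComponentIn
    (mem_connectedComponentIn hyM) hsubR

/-- The set of components of `s.M i` that contain a point of `D`. -/
def compSet (s : DefiningSeq Handlebody C) (D : Set S3) (i : ℕ) : Set (Set S3) :=
  {S | ∃ d ∈ D, S = connectedComponentIn (s.M i) d}

lemma restrictM_eq_sUnion (i : ℕ) : restrictM s D i = ⋃₀ compSet s D i := by
  ext y
  simp only [restrictM, compSet, Set.mem_iUnion, Set.mem_sUnion, Set.mem_setOf_eq]
  constructor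
  · rintro ⟨d, hd, hy⟩; exact ⟨_, ⟨d, hd, rfl⟩, hy⟩
  · rintro ⟨S, ⟨d, hd, rfl⟩, hy⟩; exact ⟨d, hd, hy⟩

lemma compSet_finite (hsub : D ⊆ C) (i : ℕ) : (compSet s D i).Finite := by
  apply (s.finiteComps i).subset
  rintro S ⟨d, hd, hS⟩
  exact ⟨d, C_subset_M s i (hsub hd), hS⟩

lemma restrictM_compact (hsub : D ⊆ C) (i : ℕ) : IsCompact (restrictM s D i) := by
  rw [restrictM_eq_sUnion]
  exact (compSet_finite s hsub i).isCompact_sUnion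
    (by rintro S ⟨d, hd, rfl⟩; exact isCompact_connectedComponentIn (s.compact i) d)

/-- The union of the components of `s.M i` *not* meeting `D` is closed, and disjoint
from `restrictM`. -/
lemma restrictM_nested (hsub : D ⊆ C) (i : ℕ) :
    restrictM s D (i + 1) ⊆ interior (restrictM s D i) := by
  set R : Set S3 :=
    ⋃₀ ({S | ∃ x ∈ s.M i, S = connectedComponentIn (s.M i) x} \ compSet s D i) with hR
  have hRclosed : IsClosed R := by
    rw [hR, Set.sUnion_eq_biUnion]
    apply Set.Finite.isClosed_biUnion ((s.finiteComps i).subset Set.diff_subset)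
    rintro S ⟨⟨x₀, hx₀, rfl⟩, -⟩
    exact (isCompact_connectedComponentIn (s.compact i) x₀).isClosed
  have hdisjR : ∀ z ∈ restrictM s D i, z ∉ R := by
    rintro z hz hzR
    obtain ⟨S, ⟨⟨x₀, hx₀, rfl⟩, hSnot⟩, hzS⟩ := hzR
    apply hSnot
    obtain ⟨d, hd, hzd⟩ := Set.mem_iUnion₂.mp hz
    have e1 : connectedComponentIn (s.M i) x₀ = connectedComponentIn (s.M i) z :=
      connectedComponentIn_eq hzS
    have e2 : connectedComponentIn (s.M i) d = connectedComponentIn (s.M i) z :=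
      connectedComponentIn_eq hzd
    exact ⟨d, hd, by rw [e1, e2]⟩
  have hU : ∀ z, z ∈ interior (s.M i) → z ∉ R → z ∈ interior (restrictM s D i) := by
    intro z hz1 hz2
    have hopen : IsOpen (interior (s.M i) \ R) := isOpen_interior.sdiff hRclosed
    refine interior_maximal ?_ hopen ⟨hz1, hz2⟩
    rintro w ⟨hw1, hw2⟩
    have hwM : w ∈ s.M i := interior_subset hw1
    by_cases hcomp : connectedComponentIn (s.M i) w ∈ compSet s D i
    · obtain ⟨d, hd, hS⟩ := hcomp
      exact Set.mem_biUnion hd (hS ▸ mem_connectedComponentIn hwM)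
    · exact absurd ⟨connectedComponentIn (s.M i) w, ⟨⟨w, hwM, rfl⟩, hcomp⟩,
        mem_connectedComponentIn hwM⟩ hw2
  intro y hy
  have hyM : y ∈ restrictM s D i := by
    obtain ⟨d, hd, hyd⟩ := Set.mem_iUnion₂.mp hy
    exact Set.mem_biUnion hd (connectedComponentIn_mono d (M_antitone s (Nat.le_succ i)) hyd)
  exact hU y (s.nested i (restrictM_subset s (i + 1) hy)) (hdisjR y hyM)

lemma restrictM_iInter (hsub : D ⊆ C) (hDcpt : IsCompact D)
    (hCtd : IsTotallyDisconnected C) : ⋂ i, restrictM s D i = D := by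
  apply Set.Subset.antisymm
  · intro z hz
    have hzR : ∀ i, z ∈ restrictM s D i := Set.mem_iInter.mp hz
    have hzM : ∀ i, z ∈ s.M i := fun i => restrictM_subset s i (hzR i)
    set K : ℕ → Set S3 := fun i => connectedComponentIn (s.M i) z ∩ D with hK
    have hKanti : ∀ i j, i ≤ j → K j ⊆ K i := fun i j h =>
      Set.inter_subset_inter_left _ (connectedComponentIn_mono z (M_antitone s h))
    have hKne : ∀ i, (K i).Nonempty := by
      intro i
      obtain ⟨d, hd, hzd⟩ := Set.mem_iUnion₂.mp (hzR i)
      have : connectedComponentIn (s.M i) d = connectedComponentIn (s.M i) z :=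
        connectedComponentIn_eq hzd
      exact ⟨d, this ▸ mem_connectedComponentIn (C_subset_M s i (hsub hd)), hd⟩
    have hKcpt : ∀ i, IsCompact (K i) := fun i =>
      (isCompact_connectedComponentIn (s.compact i) z).inter_right hDcpt.isClosed
    obtain ⟨d, hd⟩ := IsCompact.nonempty_iInter_of_directed_nonempty_isCompact_isClosed K
      (fun i j => ⟨max i j, hKanti _ _ (le_max_left i j), hKanti _ _ (le_max_right i j)⟩)
      hKne hKcpt (fun i => (hKcpt i).isClosed)
    have hdD : d ∈ D := (Set.mem_iInter.mp hd 0).2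
    -- the intersection of the components is a connected subset of C
    set T : Set S3 := ⋂ i, connectedComponentIn (s.M i) z with hT
    have hTpre : IsPreconnected T :=
      isPreconnected_iInter_of_antitone _
        (fun i j h => connectedComponentIn_mono z (M_antitone s h))
        (fun i => isCompact_connectedComponentIn (s.compact i) z)
        (fun i => isPreconnected_connectedComponentIn)
    have hTC : T ⊆ C := by
      intro w hw
      have : w ∈ ⋂ j, s.M j := Set.mem_iInter.mpr fun j =>
        connectedComponentIn_subset _ _ (Set.mem_iInter.mp hw j)
      rwa [s.iInter_eq] at this
    have hsing : T.Subsingleton := hCtd T hTC hTpre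
    have hzT : z ∈ T := Set.mem_iInter.mpr fun i => mem_connectedComponentIn (hzM i)
    have hdT : d ∈ T := Set.mem_iInter.mpr fun i => (Set.mem_iInter.mp hd i).1
    exact (hsing hzT hdT) ▸ hdD
  · exact fun d hd => Set.mem_iInter.mpr fun i => mem_restrictM s hsub hd i

/-- Restriction of a defining sequence for `C` to a defining sequence for `D ⊆ C`. -/
def restrictSeq (hsub : D ⊆ C) (hDcpt : IsCompact D) (hCtd : IsTotallyDisconnected C) :
    DefiningSeq Handlebody D where
  M i := restrictM s D i
  compact i := restrictM_compact s hsub i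
  nested i := restrictM_nested s hsub i
  handle i y hy := by
    rw [comp_restrictM_eq s i hy]
    exact s.handle i y (restrictM_subset s i hy)
  finiteComps i := (s.finiteComps i).subset (by
    rintro S ⟨y, hy, rfl⟩
    exact ⟨y, restrictM_subset s i hy, comp_restrictM_eq s i hy⟩)
  iInter_eq := restrictM_iInter s hsub hDcpt hCtd

end Restrict

/-- If `D ⊆ C` are Cantor sets in `S³`, then `g_x(D) ≤ g_x(C)` for every `x ∈ D`. -/
theorem localGenus_mono_of_subset (Handlebody : Set S3 → Prop) (genus : Set S3 → ℕ)
    (C D : Set S3) (hC : IsCantorSet C) (hD : IsCantorSet D) (hsub : D ⊆ C)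
    (x : S3) (hx : x ∈ D) :
    localGenus Handlebody genus x D ≤ localGenus Handlebody genus x C := by
  refine le_iInf fun sC => iInf_le_of_le (restrictSeq sC hsub hD.2.1 hC.2.2.2) (le_of_eq ?_)
  unfold seqGenus
  refine iSup_congr fun i => ?_
  have hxR : x ∈ restrictM sC D i := mem_restrictM sC hsub hx i
  rw [show (restrictSeq sC hsub hD.2.1 hC.2.2.2).M i = restrictM sC D i from rfl,
    comp_restrictM_eq sC i hxR]
end
end

section
/- Let (M_i) be a nested sequence of nonempty compact subsets of a metric space such that each component of M_i contains at least two components of M_{i+2}, and the supremum of diameters of components of M_i tends to 0 as i → ∞. Then C = ⋂_i M_i is homeomorphic to the Cantor set, provided each M_i has finitely many components, each of which is closed, and C is nonempty. -/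
open scoped ENNReal

set_option linter.unusedSectionVars false
noncomputable section
namespace CantorAux
open Set Filter Topology
open scoped ENNReal

variable {X : Type*} [MetricSpace X]
attribute [local instance 10] Classical.propDecidable

structure Good (C : Set X) (Q : ℕ → Set (Set X)) : Prop where
  fin : ∀ k, (Q k).Finite
  ne : ∀ k, ∀ q ∈ Q k, q.Nonempty
  cls : ∀ k, ∀ q ∈ Q k, IsClosed q
  sub : ∀ k, ∀ q ∈ Q k, q ⊆ C
  cover : ∀ k, ∀ x ∈ C, ∃ q ∈ Q k, x ∈ q
  disj : ∀ k, ∀ q ∈ Q k, ∀ r ∈ Q k, q ≠ r → Disjoint q r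
  refine : ∀ k, ∀ q ∈ Q (k + 1), ∃ r ∈ Q k, q ⊆ r
  splits : ∀ k, ∀ q ∈ Q k, ∃ u ∈ Q (k+1), ∃ v ∈ Q (k+1), u ⊆ q ∧ v ⊆ q ∧ u ≠ v

noncomputable def pick (T : Finset (Set X)) : Set X :=
  if h : T.Nonempty then h.choose else ∅

lemma pick_mem {T : Finset (Set X)} (h : T.Nonempty) : pick T ∈ T := by
  rw [pick, dif_pos h]; exact h.choose_spec

variable (Q : ℕ → Set (Set X)) {C : Set X}

noncomputable def step (hfin : ∀ k, (Q k).Finite) (b : Bool) (p : ℕ × Finset (Set X)) :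
    ℕ × Finset (Set X) :=
  if 1 < p.2.card then
    (p.1, if b then {pick p.2} else p.2.erase (pick p.2))
  else
    (p.1 + 1,
      if b then {pick ((hfin (p.1 + 1)).toFinset.filter (· ⊆ pick p.2))}
      else ((hfin (p.1 + 1)).toFinset.filter (· ⊆ pick p.2)).erase
        (pick ((hfin (p.1 + 1)).toFinset.filter (· ⊆ pick p.2))))

noncomputable def node (hfin : ∀ k, (Q k).Finite) : List Bool → ℕ × Finset (Set X)
  | [] => (0, (hfin 0).toFinset)
  | b :: l => step Q hfin b (node hfin l)

lemma sUnion_pair_split (G : Good C Q) {j : ℕ} {T : Finset (Set X)} (hT : ↑T ⊆ Q j)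
    {t : Set X} (ht : t ∈ T) :
    (⋃₀ (↑({t} : Finset (Set X)) : Set (Set X))) ∪ ⋃₀ ↑(T.erase t) = ⋃₀ ↑T ∧
      Disjoint (⋃₀ (↑({t} : Finset (Set X)) : Set (Set X))) (⋃₀ ↑(T.erase t)) := by
  constructor
  · rw [← Set.sUnion_union]
    congr 1
    rw [← Finset.coe_union, ← Finset.insert_eq, Finset.insert_erase ht]
  · apply Set.disjoint_sUnion_left.2
    intro u hu
    apply Set.disjoint_sUnion_right.2
    intro r hr
    simp only [Finset.coe_singleton, Set.mem_singleton_iff] at hu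
    rw [hu]
    have hrT : r ∈ T := Finset.mem_of_mem_erase (by exact_mod_cast hr)
    have hrt : r ≠ t := Finset.ne_of_mem_erase (by exact_mod_cast hr)
    exact G.disj j t (hT ht) r (hT hrT) (Ne.symm hrt)

lemma filter_spec (G : Good C Q) {j : ℕ} {t : Set X} (ht : t ∈ Q j) :
    (↑((G.fin (j+1)).toFinset.filter (· ⊆ t)) : Set (Set X)) ⊆ Q (j+1) ∧
      1 < ((G.fin (j+1)).toFinset.filter (· ⊆ t)).card ∧
      ⋃₀ ↑((G.fin (j+1)).toFinset.filter (· ⊆ t)) = t := by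
  have hsub : (↑((G.fin (j+1)).toFinset.filter (· ⊆ t)) : Set (Set X)) ⊆ Q (j+1) := by
    intro u hu
    simp only [Finset.coe_filter, Set.mem_setOf_eq, Set.Finite.mem_toFinset] at hu
    exact hu.1
  refine ⟨hsub, ?_, ?_⟩
  · obtain ⟨u, hu, v, hv, hut, hvt, huv⟩ := G.splits j t ht
    refine Finset.one_lt_card.2 ⟨u, ?_, v, ?_, huv⟩ <;>
      simp only [Finset.mem_filter, Set.Finite.mem_toFinset] <;> exact ⟨‹_›, ‹_›⟩
  · apply Set.Subset.antisymm
    · apply Set.sUnion_subset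
      intro u hu
      simp only [Finset.coe_filter, Set.mem_setOf_eq, Set.Finite.mem_toFinset] at hu
      exact hu.2
    · intro w hw
      obtain ⟨u, hu, hwu⟩ := G.cover (j+1) w (G.sub j t ht hw)
      obtain ⟨r, hr, hur⟩ := G.refine j u hu
      have hrt : r = t := by
        by_contra hne
        exact (G.disj j r hr t ht hne).ne_of_mem (hur hwu) hw rfl
      refine Set.mem_sUnion.2 ⟨u, ?_, hwu⟩
      simp only [Finset.coe_filter, Set.mem_setOf_eq, Set.Finite.mem_toFinset]
      exact ⟨hu, hrt ▸ hur⟩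


lemma step_pos {hfin : ∀ k, (Q k).Finite} {p : ℕ × Finset (Set X)} (h : 1 < p.2.card) (b : Bool) :
    step Q hfin b p = (p.1, if b then {pick p.2} else p.2.erase (pick p.2)) := by
  rw [step, if_pos h]

lemma step_neg {hfin : ∀ k, (Q k).Finite} {p : ℕ × Finset (Set X)} (h : ¬ 1 < p.2.card) (b : Bool) :
    step Q hfin b p = (p.1 + 1,
      if b then {pick ((hfin (p.1 + 1)).toFinset.filter (· ⊆ pick p.2))}
      else ((hfin (p.1 + 1)).toFinset.filter (· ⊆ pick p.2)).erase
        (pick ((hfin (p.1 + 1)).toFinset.filter (· ⊆ pick p.2)))) := by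
  rw [step, if_neg h]

/-- All the properties of one subdivision step. -/
lemma step_spec (G : Good C Q) {p : ℕ × Finset (Set X)} (hT : ↑p.2 ⊆ Q p.1)
    (hne : p.2.Nonempty) (b : Bool) :
    (↑(step Q G.fin b p).2 : Set (Set X)) ⊆ Q (step Q G.fin b p).1 ∧
    (step Q G.fin b p).2.Nonempty ∧
    ((step Q G.fin b p).1 = p.1 ∨ (step Q G.fin b p).1 = p.1 + 1) ∧
    ((step Q G.fin b p).1 = (step Q G.fin true p).1) ∧
    ((step Q G.fin b p).1 = p.1 + 1 → ∃ q ∈ Q p.1, ⋃₀ (↑(step Q G.fin b p).2 : Set (Set X)) ⊆ q) ∧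
    ((⋃₀ (↑(step Q G.fin true p).2 : Set (Set X))) ∪ (⋃₀ (↑(step Q G.fin false p).2 : Set (Set X))) = ⋃₀ (↑p.2 : Set (Set X))) ∧
    Disjoint (⋃₀ (↑(step Q G.fin true p).2 : Set (Set X))) (⋃₀ (↑(step Q G.fin false p).2 : Set (Set X))) ∧
    ((step Q G.fin b p).1 = p.1 → (step Q G.fin b p).2.card < p.2.card) := by
  have key : ∀ (j : ℕ) (T : Finset (Set X)), ↑T ⊆ Q j → 1 < T.card →
      (∀ b : Bool, (↑(if b then ({pick T} : Finset (Set X)) else T.erase (pick T)) :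
          Set (Set X)) ⊆ Q j ∧
        (if b then ({pick T} : Finset (Set X)) else T.erase (pick T)).Nonempty ∧
        (if b then ({pick T} : Finset (Set X)) else T.erase (pick T)).card < T.card) ∧
      ⋃₀ (↑({pick T} : Finset (Set X)) : Set (Set X)) ∪ ⋃₀ ↑(T.erase (pick T)) = ⋃₀ ↑T ∧
      Disjoint (⋃₀ (↑({pick T} : Finset (Set X)) : Set (Set X))) (⋃₀ ↑(T.erase (pick T))) := by
    intro j T hTQ hcard
    have hTne : T.Nonempty := Finset.card_pos.1 (by omega)
    have hmem : pick T ∈ T := pick_mem hTne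
    obtain ⟨hU, hD⟩ := sUnion_pair_split Q G hTQ hmem
    refine ⟨?_, hU, hD⟩
    intro b
    cases b
    · simp only [Bool.false_eq_true, if_false]
      refine ⟨fun u hu => hTQ (Finset.mem_of_mem_erase (by exact_mod_cast hu)), ?_,
        Finset.card_erase_lt_of_mem hmem⟩
      rw [← Finset.card_pos, Finset.card_erase_of_mem hmem]
      omega
    · simp only [if_true]
      refine ⟨?_, ⟨pick T, Finset.mem_singleton_self _⟩, by simpa using hcard⟩
      intro u hu
      simp only [Finset.coe_singleton, Set.mem_singleton_iff] at hu
      rw [hu]; exact hTQ hmem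
  by_cases h : 1 < p.2.card
  · have K := key p.1 p.2 hT h
    simp only [step_pos Q h]
    refine ⟨(K.1 b).1, (K.1 b).2.1, by simp, by simp, fun hh => absurd hh (by omega), ?_, ?_, fun _ => (K.1 b).2.2⟩
    · simpa using K.2.1
    · simpa using K.2.2
  · have hc1 : p.2.card = 1 := le_antisymm (not_lt.1 h) hne.card_pos
    have hmem : pick p.2 ∈ p.2 := pick_mem hne
    have htQ : pick p.2 ∈ Q p.1 := hT hmem
    obtain ⟨hf1, hf2, hf3⟩ := filter_spec Q G htQ
    have hsU : ⋃₀ (↑p.2 : Set (Set X)) = pick p.2 := by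
      obtain ⟨t, hte⟩ := Finset.card_eq_one.1 hc1
      have h2 := hmem
      rw [hte, Finset.mem_singleton] at h2
      rw [hte, h2]; simp
    have K := key (p.1 + 1) _ hf1 hf2
    simp only [step_neg Q h]
    refine ⟨(K.1 b).1, (K.1 b).2.1, by simp, by simp, ?_, ?_, ?_, fun hh => absurd hh (by omega)⟩
    · intro _
      have hFne : ((G.fin (p.1+1)).toFinset.filter (· ⊆ pick p.2)).Nonempty :=
        Finset.card_pos.1 (by omega)
      refine ⟨pick p.2, htQ, Set.Subset.trans (Set.sUnion_subset_sUnion ?_) hf3.subset⟩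
      cases b
      · simp only [Bool.false_eq_true, if_false]
        exact Finset.coe_subset.2 (Finset.erase_subset _ _)
      · simp only [if_true]
        exact Finset.coe_subset.2 (Finset.singleton_subset_iff.2 (pick_mem hFne))
    · rw [hsU]
      simpa using K.2.1.trans hf3
    · simpa using K.2.2


variable (G : Good C Q)

/-- The set at a node of the binary tree. -/
noncomputable def S (l : List Bool) : Set X := ⋃₀ ↑(node Q G.fin l).2

/-- The partition level at a node of the binary tree. -/
noncomputable def lev (l : List Bool) : ℕ := (node Q G.fin l).1

lemma node_inv (hCne : C.Nonempty) :
    ∀ l : List Bool, (↑(node Q G.fin l).2 : Set (Set X)) ⊆ Q (lev Q G l) ∧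
      (node Q G.fin l).2.Nonempty
  | [] => by
    constructor
    · rw [lev, node]
      intro q hq
      rw [Finset.mem_coe, Set.Finite.mem_toFinset] at hq
      exact hq
    · obtain ⟨x, hx⟩ := hCne
      obtain ⟨q, hq, _⟩ := G.cover 0 x hx
      exact ⟨q, (G.fin 0).mem_toFinset.2 hq⟩
  | b :: l => by
    obtain ⟨h1, h2⟩ := node_inv hCne l
    have := step_spec Q G h1 h2 b
    exact ⟨this.1, this.2.1⟩

variable (hCne : C.Nonempty)
include hCne

lemma S_union (l : List Bool) : S Q G (true :: l) ∪ S Q G (false :: l) = S Q G l :=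
  (step_spec Q G (node_inv Q G hCne l).1 (node_inv Q G hCne l).2 true).2.2.2.2.2.1

lemma S_disj (l : List Bool) : Disjoint (S Q G (true :: l)) (S Q G (false :: l)) :=
  (step_spec Q G (node_inv Q G hCne l).1 (node_inv Q G hCne l).2 true).2.2.2.2.2.2.1

lemma S_sub (b : Bool) (l : List Bool) : S Q G (b :: l) ⊆ S Q G l := by
  rw [← S_union Q G hCne l]
  cases b
  · exact Set.subset_union_right
  · exact Set.subset_union_left

lemma S_subC (l : List Bool) : S Q G l ⊆ C :=
  Set.sUnion_subset fun q hq => G.sub _ q ((node_inv Q G hCne l).1 hq)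

lemma S_ne (l : List Bool) : (S Q G l).Nonempty := by
  obtain ⟨q, hq⟩ := (node_inv Q G hCne l).2
  obtain ⟨x, hx⟩ := G.ne _ q ((node_inv Q G hCne l).1 hq)
  exact ⟨x, q, hq, hx⟩

lemma S_closed (l : List Bool) : IsClosed (S Q G l) := by
  rw [S, Set.sUnion_eq_biUnion]
  exact Set.Finite.isClosed_biUnion (Finset.finite_toSet _)
    fun q hq => G.cls _ q ((node_inv Q G hCne l).1 hq)

lemma lev_cases (b : Bool) (l : List Bool) :
    lev Q G (b :: l) = lev Q G l ∨
      (lev Q G (b :: l) = lev Q G l + 1 ∧ ∃ q ∈ Q (lev Q G l), S Q G (b :: l) ⊆ q) := by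
  have h := step_spec Q G (node_inv Q G hCne l).1 (node_inv Q G hCne l).2 b
  rcases h.2.2.1 with h' | h'
  · exact Or.inl h'
  · exact Or.inr ⟨h', h.2.2.2.2.1 h'⟩

lemma lev_agree (b : Bool) (l : List Bool) : lev Q G (b :: l) = lev Q G (true :: l) :=
  (step_spec Q G (node_inv Q G hCne l).1 (node_inv Q G hCne l).2 b).2.2.2.1

lemma card_lt (b : Bool) (l : List Bool) (h : lev Q G (b :: l) = lev Q G l) :
    (node Q G.fin (b :: l)).2.card < (node Q G.fin l).2.card :=
  (step_spec Q G (node_inv Q G hCne l).1 (node_inv Q G hCne l).2 b).2.2.2.2.2.2.2 h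

lemma lev_mono (b : Bool) (l : List Bool) : lev Q G l ≤ lev Q G (b :: l) := by
  rcases lev_cases Q G hCne b l with h | ⟨h, _⟩ <;> omega

lemma S_small (l : List Bool) (h : 1 ≤ lev Q G l) :
    ∃ q ∈ Q (lev Q G l - 1), S Q G l ⊆ q := by
  induction l with
  | nil => rw [lev, node] at h; omega
  | cons b l ih =>
    rcases lev_cases Q G hCne b l with h' | ⟨h', q, hq, hsub⟩
    · obtain ⟨q, hq, hsub⟩ := ih (by omega)
      exact ⟨q, by rwa [h'], (S_sub Q G hCne b l).trans hsub⟩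
    · refine ⟨q, ?_, hsub⟩
      rw [h']
      simpa using hq

lemma S_nil : S Q G [] = C := by
  apply Set.Subset.antisymm (S_subC Q G hCne [])
  intro x hx
  obtain ⟨q, hq, hxq⟩ := G.cover 0 x hx
  exact ⟨q, (G.fin 0).mem_toFinset.2 hq, hxq⟩

lemma S_disj_of_ne (n : ℕ) : ∀ (l l' : List Bool), l.length = n → l'.length = n →
    l ≠ l' → Disjoint (S Q G l) (S Q G l') := by
  induction n with
  | zero =>
    intro l l' hl hl' hne
    rw [List.length_eq_zero_iff] at hl hl'
    subst hl; subst hl'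
    exact absurd rfl hne
  | succ n ih =>
    rintro (_ | ⟨b, l⟩) (_ | ⟨b', l'⟩) hl hl' hne <;> simp only [List.length_cons,
      List.length_nil] at hl hl'
    · exact absurd hl (by omega)
    · exact absurd hl (by omega)
    · exact absurd hl' (by omega)
    by_cases h : l = l'
    · subst h
      have hbb : b ≠ b' := by simpa using hne
      cases b <;> cases b' <;> simp_all
      · exact (S_disj Q G hCne l).symm
      · exact S_disj Q G hCne l
    · exact (ih l l' (by omega) (by omega) h).mono (S_sub Q G hCne b l) (S_sub Q G hCne b' l')


/-- Prefixes of a branch. -/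
def pre (a : ℕ → Bool) : ℕ → List Bool
  | 0 => []
  | n + 1 => a n :: pre a n

omit hCne in
lemma pre_length (a : ℕ → Bool) (n : ℕ) : (pre a n).length = n := by
  induction n with
  | zero => rfl
  | succ n ih => simp [pre, ih]

lemma J_mono (a : ℕ → Bool) : Monotone (fun n => lev Q G (pre a n)) :=
  monotone_nat_of_le_succ fun n => lev_mono Q G hCne (a n) (pre a n)

lemma J_gt (a : ℕ → Bool) : ∀ (c : ℕ) (n : ℕ), (node Q G.fin (pre a n)).2.card ≤ c →
    ∃ m, n < m ∧ lev Q G (pre a n) < lev Q G (pre a m) := by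
  intro c
  induction c with
  | zero =>
    intro n hc
    have := (node_inv Q G hCne (pre a n)).2.card_pos
    omega
  | succ c ih =>
    intro n hc
    rcases lev_cases Q G hCne (a n) (pre a n) with h | ⟨h, _⟩
    · have hlt := card_lt Q G hCne (a n) (pre a n) h
      obtain ⟨m, hm, hlev⟩ := ih (n + 1) (by
        have : (node Q G.fin (pre a (n+1))).2.card < (node Q G.fin (pre a n)).2.card := hlt
        omega)
      refine ⟨m, by omega, ?_⟩
      have : lev Q G (pre a (n+1)) = lev Q G (pre a n) := h
      omega
    · exact ⟨n + 1, by omega, by rw [show lev Q G (pre a (n+1)) = _ from h]; omega⟩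

lemma J_tendsto (a : ℕ → Bool) :
    Filter.Tendsto (fun n => lev Q G (pre a n)) Filter.atTop Filter.atTop := by
  apply tendsto_atTop_atTop_of_monotone (J_mono Q G hCne a)
  intro k
  induction k with
  | zero => exact ⟨0, Nat.zero_le _⟩
  | succ k ih =>
    obtain ⟨n, hn⟩ := ih
    obtain ⟨m, _, hlev⟩ := J_gt Q G hCne a (node Q G.fin (pre a n)).2.card n le_rfl
    exact ⟨m, by omega⟩

variable {ε : ℕ → ℝ≥0∞}

lemma S_diam (hdiam : ∀ k, ∀ q ∈ Q k, EMetric.diam q ≤ ε k) (l : List Bool)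
    (h : 1 ≤ lev Q G l) : EMetric.diam (S Q G l) ≤ ε (lev Q G l - 1) := by
  obtain ⟨q, hq, hsub⟩ := S_small Q G hCne l h
  exact le_trans (EMetric.diam_mono hsub) (hdiam _ q hq)

lemma eq_of_mem_all (hdiam : ∀ k, ∀ q ∈ Q k, EMetric.diam q ≤ ε k)
    (hε : Filter.Tendsto ε Filter.atTop (nhds 0)) (a : ℕ → Bool) {x y : X}
    (hx : ∀ n, x ∈ S Q G (pre a n)) (hy : ∀ n, y ∈ S Q G (pre a n)) : x = y := by
  have hJ := J_tendsto Q G hCne a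
  have h1 : ∀ᶠ n in Filter.atTop, 1 ≤ lev Q G (pre a n) := hJ.eventually_ge_atTop 1
  have h2 : ∀ᶠ n in Filter.atTop, edist x y ≤ ε (lev Q G (pre a n) - 1) := by
    filter_upwards [h1] with n hn
    calc edist x y ≤ EMetric.diam (S Q G (pre a n)) :=
          EMetric.edist_le_diam_of_mem (hx n) (hy n)
      _ ≤ ε (lev Q G (pre a n) - 1) := S_diam Q G hCne hdiam _ hn
  have h3 : Filter.Tendsto (fun n => ε (lev Q G (pre a n) - 1)) Filter.atTop (nhds 0) :=
    hε.comp ((tendsto_sub_atTop_nat 1).comp hJ)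
  have := ge_of_tendsto h3 h2
  exact edist_le_zero.1 this

lemma branch_nonempty (hCcpt : IsCompact C) (a : ℕ → Bool) :
    (⋂ n, S Q G (pre a n)).Nonempty := by
  apply IsCompact.nonempty_iInter_of_sequence_nonempty_isCompact_isClosed
    (fun n => S Q G (pre a n)) (fun n => S_sub Q G hCne (a n) (pre a n))
    (fun n => S_ne Q G hCne (pre a n))
    (hCcpt.of_isClosed_subset (S_closed Q G hCne _) (S_subC Q G hCne _))
    (fun n => S_closed Q G hCne _)

/-- The itinerary (as a list, most recent bit first) of a point. -/
noncomputable def bl (x : X) : ℕ → List Bool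
  | 0 => []
  | n + 1 => (if x ∈ S Q G (true :: bl x n) then true else false) :: bl x n

/-- The coding map sending a point to its itinerary. -/
noncomputable def gfun (x : X) (n : ℕ) : Bool :=
  if x ∈ S Q G (true :: bl Q G x n) then true else false

omit hCne in
lemma bl_succ (x : X) (n : ℕ) : bl Q G x (n + 1) = gfun Q G x n :: bl Q G x n := rfl

omit hCne in
lemma bl_length (x : X) (n : ℕ) : (bl Q G x n).length = n := by
  induction n with
  | zero => rfl
  | succ n ih => simp [bl, ih]

lemma mem_bl {x : X} (hx : x ∈ C) : ∀ n, x ∈ S Q G (bl Q G x n)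
  | 0 => by rw [bl, S_nil Q G hCne]; exact hx
  | n + 1 => by
    have h := mem_bl hx n
    rw [← S_union Q G hCne (bl Q G x n)] at h
    rw [bl]
    rcases h with h | h
    · rw [if_pos h]; exact h
    · by_cases h' : x ∈ S Q G (true :: bl Q G x n)
      · rw [if_pos h']; exact h'
      · rw [if_neg h']; exact h

lemma bl_eq_of_mem {x y : X} (hy : y ∈ C) (n : ℕ) (h : y ∈ S Q G (bl Q G x n)) :
    bl Q G y n = bl Q G x n := by
  by_contra hne
  exact Set.disjoint_left.1
    (S_disj_of_ne Q G hCne n _ _ (bl_length Q G y n) (bl_length Q G x n) hne)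
    (mem_bl Q G hCne hy n) h

omit hCne in
lemma pre_gfun (x : X) (n : ℕ) : pre (gfun Q G x) n = bl Q G x n := by
  induction n with
  | zero => rfl
  | succ n ih => rw [pre, ih, bl_succ]


lemma S_bl_open (x : X) (n : ℕ) :
    IsOpen (Subtype.val ⁻¹' (S Q G (bl Q G x n)) : Set ↥C) := by
  have hfin2 : {l' : List Bool | l'.length = n ∧ l' ≠ bl Q G x n}.Finite :=
    (List.finite_length_eq Bool n).subset fun l hl => hl.1
  have hclosed : IsClosed (⋃ l' ∈ {l' : List Bool | l'.length = n ∧ l' ≠ bl Q G x n}, S Q G l') :=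
    hfin2.isClosed_biUnion fun l _ => S_closed Q G hCne l
  have key : ∀ y : ↥C, y.1 ∈ S Q G (bl Q G x n) ↔
      y.1 ∉ ⋃ l' ∈ {l' : List Bool | l'.length = n ∧ l' ≠ bl Q G x n}, S Q G l' := by
    intro y
    constructor
    · intro hy hyΩ
      obtain ⟨l, hl, hyl⟩ := Set.mem_iUnion₂.1 hyΩ
      exact Set.disjoint_left.1
        (S_disj_of_ne Q G hCne n l (bl Q G x n) hl.1 (bl_length Q G x n) hl.2) hyl hy
    · intro hy
      have hyb := mem_bl Q G hCne y.2 n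
      by_cases h : bl Q G y.1 n = bl Q G x n
      · rwa [h] at hyb
      · exact absurd (Set.mem_iUnion₂.2 ⟨bl Q G y.1 n, ⟨bl_length Q G y.1 n, h⟩, hyb⟩) hy
  have heq : (Subtype.val ⁻¹' (S Q G (bl Q G x n)) : Set ↥C) =
      (Subtype.val ⁻¹' (⋃ l' ∈ {l' : List Bool | l'.length = n ∧ l' ≠ bl Q G x n}, S Q G l'))ᶜ := by
    ext y
    simpa using key y
  rw [heq]
  exact (hclosed.preimage continuous_subtype_val).isOpen_compl

variable (hCcpt : IsCompact C)
include hCcpt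

/-- The point of `C` determined by a branch. -/
noncomputable def ff (a : ℕ → Bool) : X :=
  (branch_nonempty Q G hCne hCcpt a).choose

lemma ff_mem (a : ℕ → Bool) (n : ℕ) : ff Q G hCne hCcpt a ∈ S Q G (pre a n) :=
  Set.mem_iInter.1 (branch_nonempty Q G hCne hCcpt a).choose_spec n

lemma ff_memC (a : ℕ → Bool) : ff Q G hCne hCcpt a ∈ C := by
  have := ff_mem Q G hCne hCcpt a 0
  rwa [show pre a 0 = [] from rfl, S_nil Q G hCne] at this

lemma bl_ff (a : ℕ → Bool) : ∀ n, bl Q G (ff Q G hCne hCcpt a) n = pre a n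
  | 0 => rfl
  | n + 1 => by
    have ih := bl_ff a n
    have hmem := ff_mem Q G hCne hCcpt a (n + 1)
    rw [show pre a (n+1) = a n :: pre a n from rfl] at hmem ⊢
    rw [bl, ih]
    cases ha : a n
    · rw [ha] at hmem
      have hnot : ff Q G hCne hCcpt a ∉ S Q G (true :: pre a n) :=
        Set.disjoint_right.1 (S_disj Q G hCne (pre a n)) hmem
      rw [if_neg hnot]
    · rw [ha] at hmem
      rw [if_pos hmem]

lemma gfun_ff (a : ℕ → Bool) (n : ℕ) : gfun Q G (ff Q G hCne hCcpt a) n = a n := by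
  have h := bl_ff Q G hCne hCcpt a (n + 1)
  rw [bl_succ, show pre a (n+1) = a n :: pre a n from rfl, bl_ff Q G hCne hCcpt a n] at h
  exact (List.cons.injEq _ _ _ _ ▸ h).1

include G in
theorem good_homeo {ε : ℕ → ℝ≥0∞} (hdiam : ∀ k, ∀ q ∈ Q k, EMetric.diam q ≤ ε k)
    (hε : Filter.Tendsto ε Filter.atTop (nhds 0)) :
    Nonempty (↥C ≃ₜ (ℕ → Bool)) := by
  letI : CompactSpace ↥C := isCompact_iff_compactSpace.mp hCcpt
  let e : ↥C ≃ (ℕ → Bool) :=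
    { toFun := fun x => gfun Q G x.1
      invFun := fun a => ⟨ff Q G hCne hCcpt a, ff_memC Q G hCne hCcpt a⟩
      left_inv := by
        intro x
        apply Subtype.ext
        apply eq_of_mem_all Q G hCne hdiam hε (gfun Q G x.1)
        · intro n
          exact ff_mem Q G hCne hCcpt (gfun Q G x.1) n
        · intro n
          rw [pre_gfun]
          exact mem_bl Q G hCne x.2 n
      right_inv := by
        intro a
        funext n
        exact gfun_ff Q G hCne hCcpt a n }
  have hcont : Continuous e := by
    apply continuous_pi
    intro n
    apply IsLocallyConstant.continuous
    rw [IsLocallyConstant.iff_exists_open]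
    intro x
    refine ⟨Subtype.val ⁻¹' (S Q G (bl Q G x.1 (n + 1))), S_bl_open Q G hCne x.1 (n + 1),
      mem_bl Q G hCne x.2 (n + 1), ?_⟩
    intro y hy
    have hbl : bl Q G y.1 (n + 1) = bl Q G x.1 (n + 1) :=
      bl_eq_of_mem Q G hCne y.2 (n + 1) hy
    rw [bl_succ, bl_succ] at hbl
    show gfun Q G y.1 n = gfun Q G x.1 n
    exact (List.cons.injEq _ _ _ _ ▸ hbl).1
  exact ⟨Continuous.homeoOfEquivCompactToT2 (f := e) hcont⟩


section Components

omit hCne hCcpt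

variable (M : ℕ → Set X)

noncomputable def chain
    (hnext : ∀ i, ∀ x ∈ M i, ∃ y, y ∈ M (i + 2) ∩ connectedComponentIn (M i) x)
    (j : ℕ) (w : X) (hw : w ∈ M j) : (k : ℕ) → {p : X // p ∈ M (j + 2 * k)}
  | 0 => ⟨w, by simpa using hw⟩
  | k + 1 =>
    ⟨(hnext (j + 2 * k) (chain hnext j w hw k).1 (chain hnext j w hw k).2).choose, by
      have h := (hnext (j + 2 * k) (chain hnext j w hw k).1 (chain hnext j w hw k).2).choose_spec
      have e : j + 2 * (k + 1) = j + 2 * k + 2 := by ring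
      rw [e]
      exact h.1⟩

variable {M}

lemma chain_subset (hnested : ∀ i, M (i + 1) ⊆ M i)
    (hnext : ∀ i, ∀ x ∈ M i, ∃ y, y ∈ M (i + 2) ∩ connectedComponentIn (M i) x)
    (j : ℕ) (w : X) (hw : w ∈ M j) (k : ℕ) :
    connectedComponentIn (M (j + 2 * (k + 1))) (chain M hnext j w hw (k + 1)).1 ⊆
      connectedComponentIn (M (j + 2 * k)) (chain M hnext j w hw k).1 := by
  have hanti : Antitone M := antitone_nat_of_succ_le hnested
  have h := (hnext (j + 2 * k) (chain M hnext j w hw k).1 (chain M hnext j w hw k).2).choose_spec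
  have hval : (chain M hnext j w hw (k + 1)).1 =
      (hnext (j + 2 * k) (chain M hnext j w hw k).1 (chain M hnext j w hw k).2).choose := rfl
  have e : j + 2 * (k + 1) = j + 2 * k + 2 := by ring
  rw [hval, e]
  have h2 : connectedComponentIn (M (j + 2 * k))
        (hnext (j + 2 * k) (chain M hnext j w hw k).1 (chain M hnext j w hw k).2).choose =
      connectedComponentIn (M (j + 2 * k)) (chain M hnext j w hw k).1 :=
    (connectedComponentIn_eq h.2).symm
  exact (connectedComponentIn_mono _ (hanti (by omega))).trans h2.subset

/-- Every component of every `M j` meets the intersection `⋂ i, M i`. -/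
lemma comp_meets (hcpt : ∀ i, IsCompact (M i)) (hnested : ∀ i, M (i + 1) ⊆ M i)
    (hclosed : ∀ i, ∀ x ∈ M i, IsClosed (connectedComponentIn (M i) x))
    (hnext : ∀ i, ∀ x ∈ M i, ∃ y, y ∈ M (i + 2) ∩ connectedComponentIn (M i) x)
    (j : ℕ) (w : X) (hw : w ∈ M j) :
    (connectedComponentIn (M j) w ∩ ⋂ i, M i).Nonempty := by
  have hanti : Antitone M := antitone_nat_of_succ_le hnested
  set V : ℕ → Set X := fun k =>
    connectedComponentIn (M (j + 2 * k)) (chain M hnext j w hw k).1 with hV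
  have hVne : ∀ k, (V k).Nonempty :=
    fun k => ⟨_, mem_connectedComponentIn (chain M hnext j w hw k).2⟩
  have hVcl : ∀ k, IsClosed (V k) :=
    fun k => hclosed _ _ (chain M hnext j w hw k).2
  have hVsub : ∀ k, V (k + 1) ⊆ V k := fun k => chain_subset hnested hnext j w hw k
  have hV0 : IsCompact (V 0) :=
    (hcpt (j + 2 * 0)).of_isClosed_subset (hVcl 0) (connectedComponentIn_subset _ _)
  obtain ⟨p, hp⟩ := IsCompact.nonempty_iInter_of_sequence_nonempty_isCompact_isClosed
    V hVsub hVne hV0 hVcl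
  rw [Set.mem_iInter] at hp
  refine ⟨p, ?_, ?_⟩
  · have h0 := hp 0
    rw [hV] at h0
    simpa [chain] using h0
  · rw [Set.mem_iInter]
    intro i
    exact hanti (show i ≤ j + 2 * i by omega)
      (connectedComponentIn_subset _ _ (hp i))

end Components

end CantorAux

/-- Brouwer-type criterion: the nested intersection of finite unions of compact
connected pieces, where every component splits within two stages and component
diameters tend to `0`, is homeomorphic to the Cantor set `ℕ → Bool`. -/
theorem homeomorphic_cantor_of_defining_sequence
    {X : Type*} [MetricSpace X] (M : ℕ → Set X)
    (hne : ∀ i, (M i).Nonempty)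
    (hcpt : ∀ i, IsCompact (M i))
    (hnested : ∀ i, M (i + 1) ⊆ M i)
    -- each `M i` has finitely many components, each of which is closed
    (hfin : ∀ i, {S : Set X | ∃ x ∈ M i, S = connectedComponentIn (M i) x}.Finite)
    (hclosed : ∀ i, ∀ x ∈ M i, IsClosed (connectedComponentIn (M i) x))
    -- each component of `M i` contains at least two components of `M (i+2)`
    (hsplit : ∀ i, ∀ x ∈ M i, ∃ y ∈ M (i + 2) ∩ connectedComponentIn (M i) x,
      ∃ z ∈ M (i + 2) ∩ connectedComponentIn (M i) x,
        connectedComponentIn (M (i + 2)) y ≠ connectedComponentIn (M (i + 2)) z)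
    -- supremum of component diameters tends to 0
    (hdiam : Filter.Tendsto
      (fun i => ⨆ x ∈ M i, EMetric.diam (connectedComponentIn (M i) x))
      Filter.atTop (nhds 0))
    (C : Set X) (hC : C = ⋂ i, M i) (hCne : C.Nonempty) :
    Nonempty (C ≃ₜ (ℕ → Bool)) := by
  subst hC
  set C := ⋂ i, M i with hCdef
  have hanti : Antitone M := antitone_nat_of_succ_le hnested
  have hCsub : ∀ i, C ⊆ M i := fun i => Set.iInter_subset M i
  have hCcl : IsClosed C := isClosed_iInter fun i => (hcpt i).isClosed
  have hCcpt : IsCompact C := (hcpt 0).of_isClosed_subset hCcl (hCsub 0)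
  have hnext : ∀ i, ∀ x ∈ M i, ∃ y, y ∈ M (i + 2) ∩ connectedComponentIn (M i) x := by
    intro i x hx
    obtain ⟨y, hy, _⟩ := hsplit i x hx
    exact ⟨y, hy⟩
  set Q : ℕ → Set (Set X) := fun k =>
    {q | ∃ x, x ∈ C ∧ q = connectedComponentIn (M (2 * k)) x ∩ C} with hQ
  set ε : ℕ → ℝ≥0∞ := fun k =>
    ⨆ x ∈ M (2 * k), EMetric.diam (connectedComponentIn (M (2 * k)) x) with hε
  have hG : CantorAux.Good C Q := by
    constructor
    · -- fin
      intro k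
      refine ((hfin (2 * k)).image (fun S => S ∩ C)).subset ?_
      rintro q ⟨x, hxC, rfl⟩
      exact ⟨_, ⟨x, hCsub _ hxC, rfl⟩, rfl⟩
    · -- ne
      rintro k q ⟨x, hxC, rfl⟩
      exact ⟨x, mem_connectedComponentIn (hCsub _ hxC), hxC⟩
    · -- cls
      rintro k q ⟨x, hxC, rfl⟩
      exact (hclosed _ x (hCsub _ hxC)).inter hCcl
    · -- sub
      rintro k q ⟨x, hxC, rfl⟩
      exact Set.inter_subset_right
    · -- cover
      intro k x hx
      exact ⟨_, ⟨x, hx, rfl⟩, mem_connectedComponentIn (hCsub _ hx), hx⟩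
    · -- disj
      rintro k q ⟨x, hx, rfl⟩ r ⟨y, hy, rfl⟩ hne'
      rw [Set.disjoint_left]
      rintro w ⟨hw1, hw2⟩ ⟨hw3, _⟩
      exact hne' (by rw [(connectedComponentIn_eq hw1).trans (connectedComponentIn_eq hw3).symm])
    · -- refine
      rintro k q ⟨x, hx, rfl⟩
      refine ⟨connectedComponentIn (M (2 * k)) x ∩ C, ⟨x, hx, rfl⟩, ?_⟩
      exact Set.inter_subset_inter (connectedComponentIn_mono x (hanti (by omega)))
        Set.Subset.rfl
    · -- splits
      rintro k q ⟨x, hx, rfl⟩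
      obtain ⟨y, hy, z, hz, hyz⟩ := hsplit (2 * k) x (hCsub _ hx)
      obtain ⟨cy, hcy1, hcy2⟩ :=
        CantorAux.comp_meets hcpt hnested hclosed hnext (2 * k + 2) y hy.1
      obtain ⟨cz, hcz1, hcz2⟩ :=
        CantorAux.comp_meets hcpt hnested hclosed hnext (2 * k + 2) z hz.1
      have e : 2 * (k + 1) = 2 * k + 2 := by ring
      refine ⟨connectedComponentIn (M (2 * (k + 1))) cy ∩ C, ⟨cy, hcy2, rfl⟩,
        connectedComponentIn (M (2 * (k + 1))) cz ∩ C, ⟨cz, hcz2, rfl⟩, ?_, ?_, ?_⟩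
      · simp only [e]
        refine Set.inter_subset_inter ?_ Set.Subset.rfl
        rw [← connectedComponentIn_eq hcy1]
        exact (connectedComponentIn_mono y (hanti (by omega))).trans
          (connectedComponentIn_eq hy.2).symm.subset
      · simp only [e]
        refine Set.inter_subset_inter ?_ Set.Subset.rfl
        rw [← connectedComponentIn_eq hcz1]
        exact (connectedComponentIn_mono z (hanti (by omega))).trans
          (connectedComponentIn_eq hz.2).symm.subset
      · simp only [e]
        intro heq
        have hcy3 : cy ∈ connectedComponentIn (M (2 * k + 2)) cy :=
          mem_connectedComponentIn (connectedComponentIn_subset _ _ hcy1)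
        have hcy4 : cy ∈ connectedComponentIn (M (2 * k + 2)) cz ∩ C := by
          rw [← heq]; exact ⟨hcy3, hcy2⟩
        apply hyz
        calc connectedComponentIn (M (2 * k + 2)) y
            = connectedComponentIn (M (2 * k + 2)) cy := connectedComponentIn_eq hcy1
          _ = connectedComponentIn (M (2 * k + 2)) cz :=
              ((connectedComponentIn_eq hcy4.1).symm)
          _ = connectedComponentIn (M (2 * k + 2)) z :=
              (connectedComponentIn_eq hcz1).symm
  have hdiam' : ∀ k, ∀ q ∈ Q k, EMetric.diam q ≤ ε k := by
    rintro k q ⟨x, hx, rfl⟩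
    refine le_trans (EMetric.diam_mono Set.inter_subset_left) ?_
    exact le_iSup₂ (f := fun x (_ : x ∈ M (2 * k)) =>
      EMetric.diam (connectedComponentIn (M (2 * k)) x)) x (hCsub _ hx)
  have h2k : Filter.Tendsto (fun k => 2 * k) Filter.atTop Filter.atTop :=
    Filter.tendsto_atTop_mono (fun n => (by omega : n ≤ 2 * n)) Filter.tendsto_id
  have hε0 : Filter.Tendsto ε Filter.atTop (nhds 0) := hdiam.comp h2k
  exact CantorAux.good_homeo Q hG hCne hCcpt hdiam' hε0
end
end
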